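/- If a topological space X has a point x with nontrivial small loop group π₁ˢ(X,x) ≠ 1, then X admits no simply connected covering space. -/

import Mathlib

open CategoryTheory Topology

attribute [local instance] Path.Homotopic.setoid

noncomputable section

variable {X Y E : Type*} [TopologicalSpace X] [TopologicalSpace Y] [TopologicalSpace E]

/-- Build an element of the fundamental group from a homotopy class of loops. -/
def fromLoop {x : X} (p : Path.Homotopic.Quotient x x) : FundamentalGroup X x :=
  p

/-- The homotopy class of loops underlying an element of the fundamental group. -/
def toLoop {x : X} (γ : FundamentalGroup X x) : Path.Homotopic.Quotient x x :=
  γ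

/-- A fundamental group element is *small* if it has a loop representative inside every
neighborhood of the basepoint. -/
def IsSmall {x : X} (γ : FundamentalGroup X x) : Prop :=
  ∀ U ∈ nhds x, ∃ δ : Path x x, (∀ t, δ t ∈ U) ∧ fromLoop ⟦δ⟧ = γ

/-- The set of small loop classes, i.e. the carrier of the small loop group `π₁ˢ(X,x)`. -/
def smallSet (X : Type*) [TopologicalSpace X] (x : X) : Set (FundamentalGroup X x) :=
  {γ | IsSmall γ}

/-- Conjugate of a loop class at `y` by a path `α` from `x` to `y`: `α * β * α⁻¹`. -/
def conjPath {x y : X} (α : Path x y) (β : FundamentalGroup X y) : FundamentalGroup X x :=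
  fromLoop (Path.Homotopic.Quotient.trans
    (Path.Homotopic.Quotient.trans (⟦α⟧ : Path.Homotopic.Quotient x y) (toLoop β))
    (⟦α.symm⟧ : Path.Homotopic.Quotient y x))

/-- The SG subgroup `π₁ˢᵍ(X,x)`: generated by conjugates of small loop classes. -/
def sgSubgroup (X : Type*) [TopologicalSpace X] (x : X) : Subgroup (FundamentalGroup X x) :=
  Subgroup.closure {g | ∃ (y : X) (α : Path x y) (β : FundamentalGroup X y), IsSmall β ∧ g = conjPath α β}

/-- The map induced on fundamental groups by a continuous map. -/
def piMap (f : C(X, Y)) (x : X) (γ : FundamentalGroup X x) : FundamentalGroup Y (f x) :=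
  fromLoop (Path.Homotopic.Quotient.map (toLoop γ) f)

/-- A small loop space: a path-connected, non-simply connected space all of whose loops
are small. -/
def IsSmallLoopSpace (X : Type*) [TopologicalSpace X] : Prop :=
  PathConnectedSpace X ∧ ¬ SimplyConnectedSpace X ∧
    ∀ (x : X) (γ : FundamentalGroup X x), IsSmall γ

/-- A space is homotopically Hausdorff if every nontrivial loop class can be kept away from
some neighborhood of its basepoint. -/
def HomotopicallyHausdorff (X : Type*) [TopologicalSpace X] : Prop :=
  ∀ (x : X) (γ : FundamentalGroup X x), γ ≠ 1 →
    ∃ U ∈ nhds x, ∀ δ : Path x x, (∀ t, δ t ∈ U) → fromLoop ⟦δ⟧ ≠ γ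

/-- The image of `π₁(U,y) → π₁(X,y)`: classes of loops having a representative inside `U`. -/
def loopsIn (U : Set X) (y : X) : Set (FundamentalGroup X y) :=
  {γ | ∃ δ : Path y y, (∀ t, δ t ∈ U) ∧ fromLoop ⟦δ⟧ = γ}

/-- A semi-locally small loop space. -/
def SemiLocallySmallLoop (X : Type*) [TopologicalSpace X] : Prop :=
  ∀ x : X, ∃ U : Set X, IsOpen U ∧ x ∈ U ∧ ∀ y ∈ U, loopsIn U y = smallSet X y


lemma fromLoop_refl_eq_one (X : Type*) [TopologicalSpace X] (x : X) :
    fromLoop ⟦Path.refl x⟧ = (1 : FundamentalGroup X x) := by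
  rfl

lemma cover_surj {E X : Type*} [TopologicalSpace E] [TopologicalSpace X]
    [ConnectedSpace X] [Nonempty E] {p : E → X} (hp : IsCoveringMap p) :
    Function.Surjective p := by
  have hclopen : IsClopen (Set.range p) := by
    constructor
    · rw [← isOpen_compl_iff, isOpen_iff_mem_nhds]
      intro y hy
      obtain ⟨_, U, hyU, hU, _, H, _⟩ := hp y
      refine Filter.mem_of_superset (hU.mem_nhds hyU) ?_
      intro z hz hzr
      obtain ⟨e, he⟩ := hzr
      have hes : p e ∈ U := he ▸ hz
      exact hy ⟨((H ⟨e, hes⟩).2 : p ⁻¹' {y}).1, ((H ⟨e, hes⟩).2 : p ⁻¹' {y}).2⟩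
    · exact hp.isOpenMap.isOpen_range
  have huniv : Set.range p = Set.univ :=
    hclopen.eq_univ ⟨p Classical.ofNonempty, Set.mem_range_self _⟩
  intro y
  have hy : y ∈ Set.range p := huniv ▸ Set.mem_univ y
  exact hy


universe u

/-- if there is a point `x` with `π₁ˢ(X,x) ≠ 1`, then `X` admits no simply
connected covering space. -/
theorem no_simply_connected_cover_of_small_loop (X : Type u) [TopologicalSpace X]
    [PathConnectedSpace X] (x : X)
    (h : ∃ γ : FundamentalGroup X x, IsSmall γ ∧ γ ≠ 1) :
    ¬ ∃ (E : Type u) (_ : TopologicalSpace E) (p : C(E, X)),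
        IsCoveringMap p ∧ SimplyConnectedSpace E := by
  rintro ⟨E, instE, p, hcov, hsc⟩
  obtain ⟨γ, hγ, hne⟩ := h
  have hne' : Nonempty E := PathConnectedSpace.nonempty
  obtain ⟨e, hpe⟩ := cover_surj (p := ⇑p) hcov x
  subst hpe
  have : Nonempty (⇑p ⁻¹' {p e}) := ⟨⟨e, rfl⟩⟩
  let T := (hcov (p e)).toTrivialization
  have hxT : p e ∈ T.baseSet := (hcov (p e)).mem_toTrivialization_baseSet
  obtain ⟨δ, hδU, hδγ⟩ := hγ T.baseSet (T.open_baseSet.mem_nhds hxT)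
  have heS : e ∈ T.source := T.mem_source.mpr hxT
  set F : ↥(⇑p ⁻¹' {p e}) := (T e).2 with hF
  have hmem : ∀ t, ((δ t : X), F) ∈ T.target := fun t => T.mem_target.mpr (hδU t)
  let Δ : Path e e :=
    { toFun := fun t => T.toOpenPartialHomeomorph.symm (δ t, F)
      continuous_toFun := T.toOpenPartialHomeomorph.symm.continuousOn.comp_continuous
        (by fun_prop) hmem
      source' := by
        show T.toOpenPartialHomeomorph.symm (δ 0, F) = e
        rw [δ.source, hF]
        exact T.symm_apply_mk_proj heS
      target' := by
        show T.toOpenPartialHomeomorph.symm (δ 1, F) = e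
        rw [δ.target, hF]
        exact T.symm_apply_mk_proj heS }
  have hproj : ∀ t, p (Δ t) = δ t := fun t => T.proj_symm_apply (hmem t)
  have hΔ : Δ.Homotopic (Path.refl e) := SimplyConnectedSpace.paths_homotopic Δ (Path.refl e)
  have h1 : (Δ.map p.continuous).Homotopic ((Path.refl e).map p.continuous) := hΔ.map p
  have h2 : Δ.map p.continuous = δ := by ext t; exact hproj t
  have h3 : (Path.refl e).map p.continuous = Path.refl (p e) := by ext t; rfl
  rw [h2, h3] at h1
  have hq : (⟦δ⟧ : Path.Homotopic.Quotient (p e) (p e)) = ⟦Path.refl (p e)⟧ :=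
    Quotient.sound h1
  apply hne
  rw [← hδγ, hq, fromLoop_refl_eq_one]

end
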